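/- Let p = p(n) ∈ [0,1] satisfy (n(1−p))⁴p² → λ ∈ (0,∞) and p → 0 as n → ∞. Then both the probability that the complement of G(n,p) is 4-chordal and the probability that the complement of G(n,p) is chordal converge, as n → ∞, to e^{−√λ/2}·(1 + √λ/2). (Equivalently, the probabilities that the edge ideal I(n,p) has linear presentation and that it has linear resolution both converge to this value.) -/

import Mathlib

open Filter Finset
set_option linter.unusedSectionVars false
set_option maxRecDepth 10000
set_option maxHeartbeats 1000000

/-- Probability weight of a given graph `G` under the Erdős–Rényi model `G(n,p)`:
each of the `n.choose 2` possible edges is present independently with probability `p`. -/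
noncomputable def graphWeight (n : ℕ) (p : ℝ) (G : SimpleGraph (Fin n)) : ℝ :=
  p ^ Nat.card G.edgeSet * (1 - p) ^ (n.choose 2 - Nat.card G.edgeSet)

/-- Probability of the event `A` under the Erdős–Rényi random graph `G(n,p)`. -/
noncomputable def erProb (n : ℕ) (p : ℝ) (A : Set (SimpleGraph (Fin n))) : ℝ :=
  ∑ G : SimpleGraph (Fin n), A.indicator (graphWeight n p) G

/-- `v : ZMod k → V` describes a chordless (induced) `k`-cycle of `G`:
it is injective, consecutive vertices are adjacent, and non-consecutive
vertices are non-adjacent. -/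
def IsChordlessCycleOn {V : Type} (G : SimpleGraph V) {k : ℕ} (v : ZMod k → V) : Prop :=
  Function.Injective v ∧
    (∀ i : ZMod k, G.Adj (v i) (v (i + 1))) ∧
    ∀ i j : ZMod k, i ≠ j → j ≠ i + 1 → i ≠ j + 1 → ¬G.Adj (v i) (v j)

/-- A graph is 4-chordal if every cycle of length 4 has a chord, i.e. there is
no chordless 4-cycle. -/
def FourChordal {V : Type} (G : SimpleGraph V) : Prop :=
  ¬∃ v : ZMod 4 → V, IsChordlessCycleOn G v

/-- A graph is chordal if every cycle of length at least 4 has a chord, i.e. there is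
no chordless cycle of length at least 4. -/
def Chordal {V : Type} (G : SimpleGraph V) : Prop :=
  ∀ k : ℕ, 4 ≤ k → ¬∃ v : ZMod k → V, IsChordlessCycleOn G v


section Bernoulli
variable {ι : Type*} [Fintype ι] [DecidableEq ι]

/-- Bernoulli weight of one coordinate. -/
def bw (p : ℝ) (b : Bool) : ℝ := if b then p else 1 - p

/-- number of `true` coordinates -/
def Tcnt (f : ι → Bool) : ℕ := #(univ.filter (fun i => f i = true))

lemma sum_prod_eq {v : ι → Bool → ℝ} :
    ∑ f : ι → Bool, ∏ i, v i (f i) = ∏ i, (v i true + v i false) := by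
  have := Finset.prod_univ_sum (fun _ : ι => (univ : Finset Bool)) v
  rw [Fintype.piFinset_univ] at this
  rw [← this]; exact Finset.prod_congr rfl fun i _ => by rw [Fintype.sum_bool]

lemma prod_bw_eq (p : ℝ) (f : ι → Bool) :
    ∏ i, bw p (f i) = p ^ Tcnt f * (1 - p) ^ (Fintype.card ι - Tcnt f) := by
  have : ∀ i, bw p (f i) = if f i = true then p else 1 - p := by
    intro i; cases f i <;> simp [bw]
  rw [Finset.prod_congr rfl (fun i _ => this i), Finset.prod_ite, Finset.prod_const,
    Finset.prod_const, Tcnt]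
  congr 2
  have h2 := Finset.card_filter_add_card_filter_not (s := (univ : Finset ι))
    (p := fun i => f i = true)
  simp only [Finset.card_univ] at h2
  omega

set_option linter.unusedSectionVars false

lemma sum_pair (p : ℝ) {i j : ι} (hij : i ≠ j) :
    ∑ f : ι → Bool, (if f i = true ∧ f j = true then ∏ c, bw p (f c) else 0)
      = p ^ 2 := by
  have key : ∀ f : ι → Bool,
      (if f i = true ∧ f j = true then ∏ c, bw p (f c) else 0)
        = ∏ c, (if c = i ∨ c = j then (if f c = true then p else 0) else bw p (f c)) := by
    intro f
    by_cases hfi : f i = true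
    · by_cases hfj : f j = true
      · rw [if_pos ⟨hfi, hfj⟩]
        refine Finset.prod_congr rfl fun c _ => ?_
        by_cases hc : c = i ∨ c = j
        · rcases hc with rfl | rfl <;> simp [hfi, hfj, bw]
        · simp [hc]
      · rw [if_neg (by tauto)]
        refine (Finset.prod_eq_zero (Finset.mem_univ j) ?_).symm
        simp [hfj]
    · rw [if_neg (by tauto)]
      refine (Finset.prod_eq_zero (Finset.mem_univ i) ?_).symm
      simp [hfi]
  rw [Finset.sum_congr rfl fun f _ => key f,
    sum_prod_eq (v := fun c b => if c = i ∨ c = j then (if b = true then p else 0) else bw p b)]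
  have : ∀ c : ι, ((if c = i ∨ c = j then (if true then p else 0) else bw p true) +
      (if c = i ∨ c = j then (if (false : Bool) = true then p else 0) else bw p false))
      = if c ∈ ({i, j} : Finset ι) then p else 1 := by
    intro c
    by_cases hc : c = i ∨ c = j <;>
      simp [hc, bw, Finset.mem_insert, Finset.mem_singleton]
  rw [Finset.prod_congr rfl fun c _ => this c, Finset.prod_ite_mem,
    Finset.univ_inter, Finset.prod_const, Finset.card_insert_of_notMem (by simp [hij]),
    Finset.card_singleton]

lemma sum_atMostOne (p : ℝ) :
    ∑ f : ι → Bool, (if Tcnt f ≤ 1 then ∏ c, bw p (f c) else 0)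
      = (1 - p) ^ Fintype.card ι
        + (Fintype.card ι : ℝ) * p * (1 - p) ^ (Fintype.card ι - 1) := by
  classical
  rw [← Finset.sum_filter]
  have hsplit : (univ.filter (fun f : ι → Bool => Tcnt f ≤ 1))
      = (univ.filter (fun f : ι → Bool => Tcnt f = 0))
        ∪ (univ.filter (fun f : ι → Bool => Tcnt f = 1)) := by
    ext f; simp only [Finset.mem_union, Finset.mem_filter, Finset.mem_univ, true_and]
    omega
  rw [hsplit, Finset.sum_union (by
    rw [Finset.disjoint_left]; intro f hf hg
    simp only [Finset.mem_filter] at hf hg; omega)]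
  have h0 : (univ.filter (fun f : ι → Bool => Tcnt f = 0)) = {fun _ => false} := by
    ext f
    simp only [Finset.mem_filter, Finset.mem_univ, true_and, Finset.mem_singleton, Tcnt,
      Finset.card_eq_zero]
    constructor
    · intro hf
      funext c
      by_contra hc
      have hfc : f c = true := by revert hc; cases f c <;> simp
      have hcm : c ∈ Finset.univ.filter (fun i => f i = true) := by simp [hfc]
      rw [hf] at hcm
      exact absurd hcm (Finset.notMem_empty c)
    · intro hf; subst hf; simp
  have h1card : #(univ.filter (fun f : ι → Bool => Tcnt f = 1)) = Fintype.card ι := by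
    rw [← Finset.card_univ (α := ι)]
    refine (Finset.card_bij (fun i _ => fun c => decide (c = i)) ?_ ?_ ?_).symm
    · intro i _
      simp only [Finset.mem_filter, Finset.mem_univ, true_and]
      simp only [Tcnt]
      have : (univ.filter fun c => decide (c = i) = true) = {i} := by
        ext c; simp
      rw [this, Finset.card_singleton]
    · intro a _ b _ hab
      have := congrFun hab a
      simpa using this
    · intro f hf
      simp only [Finset.mem_filter, Finset.mem_univ, true_and] at hf
      simp only [Tcnt] at hf
      obtain ⟨i, hi⟩ := Finset.card_eq_one.mp hf
      refine ⟨i, Finset.mem_univ i, ?_⟩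
      have hmem : ∀ c, f c = true ↔ c = i := by
        intro c
        constructor
        · intro hfc
          have hcm : c ∈ Finset.univ.filter (fun i => f i = true) := by simp [hfc]
          rw [hi] at hcm; simpa using hcm
        · intro hc; subst hc
          have hcm : c ∈ Finset.univ.filter (fun i => f i = true) := by rw [hi]; simp
          simpa using hcm
      funext c
      by_cases hc : c = i
      · simp [hc, (hmem i).mpr rfl]
      · simp only [decide_eq_false hc]
        cases hfc : f c
        · simp [hc]
        · exact absurd ((hmem c).mp hfc) hc
  rw [h0, Finset.sum_singleton]
  have e0 : ∏ c : ι, bw p ((fun _ => false) c) = (1 - p) ^ Fintype.card ι := by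
    rw [prod_bw_eq]
    have : Tcnt (fun _ : ι => false) = 0 := by simp [Tcnt]
    rw [this]; simp
  have e1 : ∀ f ∈ univ.filter (fun f : ι → Bool => Tcnt f = 1),
      ∏ c, bw p (f c) = p * (1 - p) ^ (Fintype.card ι - 1) := by
    intro f hf
    simp only [Finset.mem_filter, Finset.mem_univ, true_and] at hf
    rw [prod_bw_eq, hf, pow_one]
  rw [e0, Finset.sum_congr rfl e1, Finset.sum_const, h1card, nsmul_eq_mul]
  ring

end Bernoulli

section Transfer
open scoped Classical
variable {n : ℕ}

abbrev ESlot (n : ℕ) := {e : Sym2 (Fin n) // e ∈ (⊤ : SimpleGraph (Fin n)).edgeFinset}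

noncomputable def gToF (n : ℕ) (G : SimpleGraph (Fin n)) : ESlot n → Bool :=
  fun e => decide (e.1 ∈ G.edgeSet)

lemma gToF_true_iff {G : SimpleGraph (Fin n)} {e : ESlot n} :
    gToF n G e = true ↔ e.1 ∈ G.edgeSet := by simp [gToF]

lemma mem_top_slot {G : SimpleGraph (Fin n)} {e : Sym2 (Fin n)} (he : e ∈ G.edgeSet) :
    e ∈ (⊤ : SimpleGraph (Fin n)).edgeFinset :=
  SimpleGraph.mem_edgeFinset.mpr (SimpleGraph.edgeSet_mono le_top he)

lemma gToF_bijective : Function.Bijective (gToF n) := by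
  constructor
  · intro G G' hGG'
    rw [← SimpleGraph.edgeSet_inj]
    ext e
    constructor
    · intro he
      have := congrFun hGG' ⟨e, mem_top_slot he⟩
      rw [gToF_true_iff.mpr he] at this
      exact gToF_true_iff.mp this.symm
    · intro he
      have := congrFun hGG' ⟨e, mem_top_slot he⟩
      rw [(gToF_true_iff (G := G')).mpr he] at this
      exact gToF_true_iff.mp this
  · intro f
    refine ⟨SimpleGraph.fromEdgeSet
      {e | ∃ h : e ∈ (⊤ : SimpleGraph (Fin n)).edgeFinset, f ⟨e, h⟩ = true}, ?_⟩
    funext e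
    obtain ⟨e, he⟩ := e
    have hnd : ¬ e.IsDiag := by
      have := SimpleGraph.mem_edgeFinset.mp he
      rw [SimpleGraph.edgeSet_top] at this
      exact this
    have : e ∈ (SimpleGraph.fromEdgeSet
        {e | ∃ h : e ∈ (⊤ : SimpleGraph (Fin n)).edgeFinset, f ⟨e, h⟩ = true}).edgeSet
        ↔ f ⟨e, he⟩ = true := by
      rw [SimpleGraph.edgeSet_fromEdgeSet]
      simp only [Set.mem_diff, Set.mem_setOf_eq]
      constructor
      · rintro ⟨⟨h, hf⟩, _⟩; exact hf
      · intro hf; exact ⟨⟨he, hf⟩, hnd⟩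
    cases hfe : f ⟨e, he⟩
    · simp only [gToF, decide_eq_false_iff_not]
      rw [this, hfe]; simp
    · simp only [gToF, decide_eq_true_eq]
      rw [this]; exact hfe

lemma card_eslot : Fintype.card (ESlot n) = n.choose 2 := by
  rw [Fintype.card_coe, SimpleGraph.card_edgeFinset_top_eq_card_choose_two, Fintype.card_fin]

lemma tcnt_gToF (G : SimpleGraph (Fin n)) : Tcnt (gToF n G) = Nat.card G.edgeSet := by
  have e : G.edgeSet ≃ {e : ESlot n // gToF n G e = true} :=
    { toFun := fun e => ⟨⟨e.1, mem_top_slot e.2⟩, gToF_true_iff.mpr e.2⟩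
      invFun := fun x => ⟨x.1.1, gToF_true_iff.mp x.2⟩
      left_inv := fun e => rfl
      right_inv := fun x => by ext1; ext1; rfl }
  rw [Nat.card_congr e, Nat.card_eq_fintype_card, Fintype.card_subtype, Tcnt]

lemma graphWeight_eq_prod (p : ℝ) (G : SimpleGraph (Fin n)) :
    graphWeight n p G = ∏ e : ESlot n, bw p (gToF n G e) := by
  rw [prod_bw_eq, tcnt_gToF, card_eslot, graphWeight]

end Transfer

section ERLemmas
open scoped Classical
variable {n : ℕ} {p : ℝ}

lemma graphWeight_nonneg (hp0 : 0 ≤ p) (hp1 : p ≤ 1) (G : SimpleGraph (Fin n)) :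
    0 ≤ graphWeight n p G :=
  mul_nonneg (pow_nonneg hp0 _) (pow_nonneg (by linarith) _)

lemma erProb_eq_sum_ite (A : Set (SimpleGraph (Fin n))) :
    erProb n p A = ∑ G : SimpleGraph (Fin n), if G ∈ A then graphWeight n p G else 0 :=
  Finset.sum_congr rfl fun G _ => Set.indicator_apply A _ G

lemma erProb_mono (hp0 : 0 ≤ p) (hp1 : p ≤ 1) {A B : Set (SimpleGraph (Fin n))}
    (hAB : A ⊆ B) : erProb n p A ≤ erProb n p B := by
  rw [erProb_eq_sum_ite, erProb_eq_sum_ite]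
  refine Finset.sum_le_sum fun G _ => ?_
  by_cases hG : G ∈ A
  · rw [if_pos hG, if_pos (hAB hG)]
  · rw [if_neg hG]
    split
    · exact graphWeight_nonneg hp0 hp1 G
    · exact le_refl 0

lemma erProb_le_sum (hp0 : 0 ≤ p) (hp1 : p ≤ 1) {A : Set (SimpleGraph (Fin n))}
    {κ : Type*} (t : Finset κ) (E : κ → Set (SimpleGraph (Fin n)))
    (hA : ∀ G ∈ A, ∃ k ∈ t, G ∈ E k) :
    erProb n p A ≤ ∑ k ∈ t, erProb n p (E k) := by
  rw [erProb_eq_sum_ite]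
  have : ∀ k ∈ t, erProb n p (E k) = ∑ G : SimpleGraph (Fin n),
      if G ∈ E k then graphWeight n p G else 0 := fun k _ => erProb_eq_sum_ite _
  rw [Finset.sum_congr rfl this, Finset.sum_comm]
  refine Finset.sum_le_sum fun G _ => ?_
  by_cases hG : G ∈ A
  · rw [if_pos hG]
    obtain ⟨k, hk, hGk⟩ := hA G hG
    calc graphWeight n p G = (if G ∈ E k then graphWeight n p G else 0) := by rw [if_pos hGk]
    _ ≤ ∑ k ∈ t, if G ∈ E k then graphWeight n p G else 0 := by
        refine Finset.single_le_sum (f := fun k => if G ∈ E k then graphWeight n p G else 0)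
          (fun k _ => by
            show (0:ℝ) ≤ if G ∈ E k then graphWeight n p G else 0
            by_cases hk' : G ∈ E k
            · rw [if_pos hk']; exact graphWeight_nonneg hp0 hp1 G
            · rw [if_neg hk']) hk
  · rw [if_neg hG]
    refine Finset.sum_nonneg fun k _ => ?_
    split
    · exact graphWeight_nonneg hp0 hp1 G
    · exact le_refl _

end ERLemmas

section Events
open scoped Classical
variable {n : ℕ} {p : ℝ}

lemma erProb_atMostOne :
    erProb n p {G | Nat.card G.edgeSet ≤ 1}
      = (1 - p) ^ n.choose 2 + (n.choose 2 : ℝ) * p * (1 - p) ^ (n.choose 2 - 1) := by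
  have step : ∀ G : SimpleGraph (Fin n),
      Set.indicator {G : SimpleGraph (Fin n) | Nat.card G.edgeSet ≤ 1} (graphWeight n p) G
        = (fun f : ESlot n → Bool => if Tcnt f ≤ 1 then ∏ e, bw p (f e) else 0) (gToF n G) := by
    intro G
    by_cases hG : G ∈ {G : SimpleGraph (Fin n) | Nat.card G.edgeSet ≤ 1}
    · rw [Set.indicator_of_mem hG]
      show graphWeight n p G = if Tcnt (gToF n G) ≤ 1 then ∏ e, bw p (gToF n G e) else 0
      rw [if_pos (by rw [tcnt_gToF]; exact hG), graphWeight_eq_prod]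
    · rw [Set.indicator_of_notMem hG]
      show (0 : ℝ) = if Tcnt (gToF n G) ≤ 1 then ∏ e, bw p (gToF n G e) else 0
      rw [if_neg (by rw [tcnt_gToF]; exact hG)]
  rw [erProb]
  refine Eq.trans (Finset.sum_congr rfl fun G _ => step G) ?_
  refine Eq.trans (Fintype.sum_bijective (gToF n) gToF_bijective _
    (fun f : ESlot n → Bool => if Tcnt f ≤ 1 then ∏ e, bw p (f e) else 0) (fun G => rfl)) ?_
  rw [sum_atMostOne, card_eslot]

lemma erProb_empty_of {A : Set (SimpleGraph (Fin n))} (h : ∀ G, G ∉ A) :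
    erProb n p A = 0 := by
  rw [erProb_eq_sum_ite]
  refine Finset.sum_eq_zero fun G _ => if_neg (h G)

lemma erProb_pair {x y z : Fin n} (hxy : x ≠ y) (hxz : x ≠ z) (hyz : y ≠ z) :
    erProb n p {G | G.Adj x y ∧ G.Adj x z} = p ^ 2 := by
  have hm1 : s(x,y) ∈ (⊤ : SimpleGraph (Fin n)).edgeFinset := by
    simp [SimpleGraph.mem_edgeFinset, SimpleGraph.mem_edgeSet, hxy]
  have hm2 : s(x,z) ∈ (⊤ : SimpleGraph (Fin n)).edgeFinset := by
    simp [SimpleGraph.mem_edgeFinset, SimpleGraph.mem_edgeSet, hxz]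
  have hij : (⟨s(x,y), hm1⟩ : ESlot n) ≠ ⟨s(x,z), hm2⟩ := by
    intro hcon
    have h2 := congrArg Subtype.val hcon
    simp only [Sym2.eq_iff] at h2
    tauto
  have step : ∀ G : SimpleGraph (Fin n),
      Set.indicator {G : SimpleGraph (Fin n) | G.Adj x y ∧ G.Adj x z} (graphWeight n p) G
        = (fun f : ESlot n → Bool =>
            if f ⟨s(x,y), hm1⟩ = true ∧ f ⟨s(x,z), hm2⟩ = true then ∏ e, bw p (f e) else 0)
          (gToF n G) := by
    intro G
    have hcond : (G.Adj x y ∧ G.Adj x z)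
        ↔ (gToF n G ⟨s(x,y), hm1⟩ = true ∧ gToF n G ⟨s(x,z), hm2⟩ = true) := by
      simp only [gToF_true_iff, SimpleGraph.mem_edgeSet]
    by_cases hG : G ∈ {G : SimpleGraph (Fin n) | G.Adj x y ∧ G.Adj x z}
    · rw [Set.indicator_of_mem hG]
      show graphWeight n p G = if _ ∧ _ then ∏ e, bw p (gToF n G e) else 0
      rw [if_pos (hcond.mp hG), graphWeight_eq_prod]
    · rw [Set.indicator_of_notMem hG]
      show (0 : ℝ) = if _ ∧ _ then ∏ e, bw p (gToF n G e) else 0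
      rw [if_neg (fun hc => hG (hcond.mpr hc))]
  rw [erProb]
  refine Eq.trans (Finset.sum_congr rfl fun G _ => step G) ?_
  refine Eq.trans (Fintype.sum_bijective (gToF n) gToF_bijective _
    (fun f : ESlot n → Bool =>
      if f ⟨s(x,y), hm1⟩ = true ∧ f ⟨s(x,z), hm2⟩ = true then ∏ e, bw p (f e) else 0)
    (fun G => rfl)) ?_
  exact sum_pair p hij

lemma erProb_P3_le (hp0 : 0 ≤ p) (hp1 : p ≤ 1) :
    erProb n p {G : SimpleGraph (Fin n) | ∃ x y z : Fin n, y ≠ z ∧ G.Adj x y ∧ G.Adj x z}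
      ≤ (n : ℝ) ^ 3 * p ^ 2 := by
  set t : Finset (Fin n × Fin n × Fin n) := univ.filter (fun w => w.2.1 ≠ w.2.2) with ht
  have hcov : ∀ G ∈ {G : SimpleGraph (Fin n) | ∃ x y z : Fin n, y ≠ z ∧ G.Adj x y ∧ G.Adj x z},
      ∃ k ∈ t, G ∈ {G : SimpleGraph (Fin n) | G.Adj k.1 k.2.1 ∧ G.Adj k.1 k.2.2} := by
    rintro G ⟨x, y, z, hyz, h1, h2⟩
    exact ⟨(x, y, z), by simp [ht, hyz], h1, h2⟩
  refine (erProb_le_sum hp0 hp1 t _ hcov).trans ?_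
  have hterm : ∀ w ∈ t,
      erProb n p {G : SimpleGraph (Fin n) | G.Adj w.1 w.2.1 ∧ G.Adj w.1 w.2.2} ≤ p ^ 2 := by
    rintro ⟨x, y, z⟩ hw
    have hyz : y ≠ z := by simpa [ht] using hw
    by_cases hxy : x = y
    · subst hxy
      rw [erProb_empty_of (fun G hG => G.loopless.irrefl x hG.1)]
      exact sq_nonneg p
    by_cases hxz : x = z
    · subst hxz
      rw [erProb_empty_of (fun G hG => G.loopless.irrefl x hG.2)]
      exact sq_nonneg p
    · exact le_of_eq (erProb_pair hxy hxz hyz)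
  refine (Finset.sum_le_sum hterm).trans ?_
  rw [Finset.sum_const, nsmul_eq_mul]
  have hcard : (#t : ℝ) ≤ (n : ℝ) ^ 3 := by
    have h1 : #t ≤ Fintype.card (Fin n × Fin n × Fin n) := by
      rw [← Finset.card_univ]; exact Finset.card_filter_le _ _
    have h2 : Fintype.card (Fin n × Fin n × Fin n) = n ^ 3 := by
      simp [Fintype.card_prod, Fintype.card_fin]; ring
    calc (#t : ℝ) ≤ ((n^3 : ℕ) : ℝ) := by exact_mod_cast h2 ▸ h1
    _ = (n:ℝ)^3 := by push_cast; ring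
  exact mul_le_mul_of_nonneg_right hcard (sq_nonneg p)

end Events


section MoreER
open scoped Classical
variable {n : ℕ} {p : ℝ}

lemma erProb_nonneg (hp0 : 0 ≤ p) (hp1 : p ≤ 1) (A : Set (SimpleGraph (Fin n))) :
    0 ≤ erProb n p A := by
  rw [erProb_eq_sum_ite]
  refine Finset.sum_nonneg fun G _ => ?_
  split
  · exact graphWeight_nonneg hp0 hp1 G
  · exact le_refl 0

lemma erProb_union_le (hp0 : 0 ≤ p) (hp1 : p ≤ 1) (A B : Set (SimpleGraph (Fin n))) :
    erProb n p (A ∪ B) ≤ erProb n p A + erProb n p B := by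
  rw [erProb_eq_sum_ite, erProb_eq_sum_ite, erProb_eq_sum_ite, ← Finset.sum_add_distrib]
  refine Finset.sum_le_sum fun G _ => ?_
  have hw := graphWeight_nonneg hp0 hp1 G
  by_cases hA : G ∈ A
  · rw [if_pos (Set.mem_union_left B hA), if_pos hA]
    have : (0:ℝ) ≤ if G ∈ B then graphWeight n p G else 0 := by
      split
      · exact hw
      · exact le_refl 0
    linarith
  · by_cases hB : G ∈ B
    · rw [if_pos (Set.mem_union_right A hB), if_neg hA, if_pos hB]
      linarith
    · rw [if_neg (fun hc => hc.elim hA hB), if_neg hA, if_neg hB]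
      linarith

end MoreER

section Combinatorics
variable {n : ℕ}

lemma zmod_cast_ne {k : ℕ} (hk : 4 ≤ k) {a b : ℕ} (hlt : a < b) (hd : b - a < 4) :
    ((a : ZMod k)) ≠ (b : ZMod k) := by
  intro hcon
  have h1 : a ≡ b [MOD k] := (ZMod.natCast_eq_natCast_iff _ _ _).mp hcon
  have h2 : (k : ℤ) ∣ (b : ℤ) - (a : ℤ) := h1.dvd
  have h3 : (0 : ℤ) < (b : ℤ) - (a : ℤ) := by
    have : (a : ℤ) < (b : ℤ) := by exact_mod_cast hlt
    omega
  have h4 := Int.le_of_dvd h3 h2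
  omega

lemma chordal_of_card_le_one {G : SimpleGraph (Fin n)} (h : Nat.card G.edgeSet ≤ 1) :
    Chordal Gᶜ := by
  rintro k hk ⟨v, hinj, _, hnon⟩
  have h01 : ((0:ℕ) : ZMod k) ≠ ((1:ℕ) : ZMod k) := zmod_cast_ne hk (by norm_num) (by norm_num)
  have h02 : ((0:ℕ) : ZMod k) ≠ ((2:ℕ) : ZMod k) := zmod_cast_ne hk (by norm_num) (by norm_num)
  have h03 : ((0:ℕ) : ZMod k) ≠ ((3:ℕ) : ZMod k) := zmod_cast_ne hk (by norm_num) (by norm_num)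
  have h12 : ((1:ℕ) : ZMod k) ≠ ((2:ℕ) : ZMod k) := zmod_cast_ne hk (by norm_num) (by norm_num)
  have h13 : ((1:ℕ) : ZMod k) ≠ ((3:ℕ) : ZMod k) := zmod_cast_ne hk (by norm_num) (by norm_num)
  have h14 : ((1:ℕ) : ZMod k) ≠ ((4:ℕ) : ZMod k) := zmod_cast_ne hk (by norm_num) (by norm_num)
  have h23 : ((2:ℕ) : ZMod k) ≠ ((3:ℕ) : ZMod k) := zmod_cast_ne hk (by norm_num) (by norm_num)
  have hadd1 : ((0:ℕ) : ZMod k) + 1 = ((1:ℕ) : ZMod k) := by push_cast; ring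
  have hadd2 : ((1:ℕ) : ZMod k) + 1 = ((2:ℕ) : ZMod k) := by push_cast; ring
  have hadd3 : ((2:ℕ) : ZMod k) + 1 = ((3:ℕ) : ZMod k) := by push_cast; ring
  have hadd4 : ((3:ℕ) : ZMod k) + 1 = ((4:ℕ) : ZMod k) := by push_cast; ring
  have hn02 : ¬Gᶜ.Adj (v ((0:ℕ) : ZMod k)) (v ((2:ℕ) : ZMod k)) := by
    refine hnon _ _ h02 ?_ ?_
    · rw [hadd1]; exact fun hcon => h12 hcon.symm
    · rw [hadd3]; exact h03
  have hn13 : ¬Gᶜ.Adj (v ((1:ℕ) : ZMod k)) (v ((3:ℕ) : ZMod k)) := by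
    refine hnon _ _ h13 ?_ ?_
    · rw [hadd2]; exact fun hcon => h23 hcon.symm
    · rw [hadd4]; exact h14
  have ha02 : G.Adj (v ((0:ℕ) : ZMod k)) (v ((2:ℕ) : ZMod k)) := by
    by_contra hcon
    exact hn02 ((SimpleGraph.compl_adj G _ _).mpr ⟨fun he => h02 (hinj he), hcon⟩)
  have ha13 : G.Adj (v ((1:ℕ) : ZMod k)) (v ((3:ℕ) : ZMod k)) := by
    by_contra hcon
    exact hn13 ((SimpleGraph.compl_adj G _ _).mpr ⟨fun he => h13 (hinj he), hcon⟩)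
  have hne : s(v ((0:ℕ) : ZMod k), v ((2:ℕ) : ZMod k))
      ≠ s(v ((1:ℕ) : ZMod k), v ((3:ℕ) : ZMod k)) := by
    intro hcon
    rw [Sym2.eq_iff] at hcon
    rcases hcon with ⟨hx, _⟩ | ⟨hx, hy⟩
    · exact h01 (hinj hx)
    · exact h03 (hinj hx)
  have hsub : ({s(v ((0:ℕ) : ZMod k), v ((2:ℕ) : ZMod k)),
      s(v ((1:ℕ) : ZMod k), v ((3:ℕ) : ZMod k))} : Set (Sym2 (Fin n))) ⊆ G.edgeSet := by
    rintro e (rfl | rfl)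
    · exact ha02
    · exact ha13
  have h2 : 2 ≤ G.edgeSet.ncard := by
    rw [← Set.ncard_pair hne]
    exact Set.ncard_le_ncard hsub (Set.toFinite _)
  rw [Nat.card_coe_set_eq] at h
  omega

lemma fourChordal_of_chordal {G : SimpleGraph (Fin n)} (h : Chordal G) : FourChordal G :=
  h 4 (le_refl 4)

lemma not_fourChordal_compl {G : SimpleGraph (Fin n)} (h2 : 2 ≤ Nat.card G.edgeSet)
    (hP3 : ¬∃ x y z : Fin n, y ≠ z ∧ G.Adj x y ∧ G.Adj x z) : ¬FourChordal Gᶜ := by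
  push_neg at hP3
  rw [Nat.card_coe_set_eq] at h2
  intro hFC
  obtain ⟨e1, he1, e2, he2, hee⟩ := (Set.one_lt_ncard_iff (Set.toFinite _)).mp h2
  have key : ∀ a b c d : Fin n, G.Adj a b → G.Adj c d → s(a,b) ≠ s(c,d) → False := by
    intro a b c d hab hcd hee2
    have hab' : a ≠ b := G.ne_of_adj hab
    have hcd' : c ≠ d := G.ne_of_adj hcd
    have hac : a ≠ c := by
      rintro rfl
      have hbd : b ≠ d := by rintro rfl; exact hee2 rfl
      exact hP3 a b d hbd hab hcd
    have had : a ≠ d := by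
      rintro rfl
      have hbc : b ≠ c := by
        rintro rfl
        exact hee2 Sym2.eq_swap
      exact hP3 a b c hbc hab hcd.symm
    have hbc : b ≠ c := by
      rintro rfl
      exact hP3 b a d had hab.symm hcd
    have hbd : b ≠ d := by
      rintro rfl
      exact hP3 b a c hac hab.symm hcd.symm
    have hAC : Gᶜ.Adj a c := (SimpleGraph.compl_adj G a c).mpr
      ⟨hac, fun hx => hP3 a b c hbc hab hx⟩
    have hCB : Gᶜ.Adj c b := (SimpleGraph.compl_adj G c b).mpr
      ⟨hbc.symm, fun hx => hP3 c b d hbd hx hcd⟩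
    have hBD : Gᶜ.Adj b d := (SimpleGraph.compl_adj G b d).mpr
      ⟨hbd, fun hx => hP3 b a d had hab.symm hx⟩
    have hDA : Gᶜ.Adj d a := (SimpleGraph.compl_adj G d a).mpr
      ⟨had.symm, fun hx => hP3 d c a hac.symm hcd.symm hx⟩
    have hAB : ¬Gᶜ.Adj a b := fun hx => ((SimpleGraph.compl_adj G a b).mp hx).2 hab
    have hBA : ¬Gᶜ.Adj b a := fun hx => hAB hx.symm
    have hCD : ¬Gᶜ.Adj c d := fun hx => ((SimpleGraph.compl_adj G c d).mp hx).2 hcd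
    have hDC : ¬Gᶜ.Adj d c := fun hx => hCD hx.symm
    apply hFC
    have hZ : ∀ i : ZMod 4, i = 0 ∨ i = 1 ∨ i = 2 ∨ i = 3 := by decide
    set v : ZMod 4 → Fin n :=
      (fun i => if i = 0 then a else if i = 1 then c else if i = 2 then b else d) with hv
    have v0 : v 0 = a := by simp [hv]
    have v1 : v 1 = c := by
      simp [hv, eq_false (show ¬((1 : ZMod 4) = 0) by decide)]
    have v2 : v 2 = b := by
      simp [hv, eq_false (show ¬((2 : ZMod 4) = 0) by decide),
        eq_false (show ¬((2 : ZMod 4) = 1) by decide)]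
    have v3 : v 3 = d := by
      simp [hv, eq_false (show ¬((3 : ZMod 4) = 0) by decide),
        eq_false (show ¬((3 : ZMod 4) = 1) by decide),
        eq_false (show ¬((3 : ZMod 4) = 2) by decide)]
    refine ⟨v, ?_, ?_, ?_⟩
    · intro i j hij
      rcases hZ i with rfl | rfl | rfl | rfl <;> rcases hZ j with rfl | rfl | rfl | rfl <;>
        simp only [v0, v1, v2, v3] at hij <;>
        first
          | rfl
          | exact absurd hij hab'
          | exact absurd hij.symm hab'
          | exact absurd hij hac
          | exact absurd hij.symm hac
          | exact absurd hij had
          | exact absurd hij.symm had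
          | exact absurd hij hbc
          | exact absurd hij.symm hbc
          | exact absurd hij hbd
          | exact absurd hij.symm hbd
          | exact absurd hij hcd'
          | exact absurd hij.symm hcd'
    · intro i
      rcases hZ i with rfl | rfl | rfl | rfl
      · rw [show (0 : ZMod 4) + 1 = 1 by decide, v0, v1]; exact hAC
      · rw [show (1 : ZMod 4) + 1 = 2 by decide, v1, v2]; exact hCB
      · rw [show (2 : ZMod 4) + 1 = 3 by decide, v2, v3]; exact hBD
      · rw [show (3 : ZMod 4) + 1 = 0 by decide, v3, v0]; exact hDA
    · intro i j h1 h2' h3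
      rcases hZ i with rfl | rfl | rfl | rfl <;> rcases hZ j with rfl | rfl | rfl | rfl <;>
        first
          | (exfalso; revert h1; decide)
          | (exfalso; revert h2'; decide)
          | (exfalso; revert h3; decide)
          | (simp only [v0, v1, v2, v3]; first | exact hAB | exact hBA | exact hCD | exact hDC)
  induction e1 using Sym2.ind with
  | _ a b =>
    induction he1 using Sym2.ind with
    | _ c d => exact key a b c d e2 he2 hee

end Combinatorics

section Analysis

lemma choose_two_cast {n : ℕ} (hn : 1 ≤ n) :
    ((n.choose 2 : ℕ) : ℝ) = ((n : ℝ) ^ 2 - n) / 2 := by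
  rw [Nat.choose_two_right,
    Nat.cast_div (Nat.even_mul_pred_self n).two_dvd (by norm_num)]
  rw [Nat.cast_mul, Nat.cast_sub hn]
  push_cast
  ring

lemma log_one_sub_bounds {x : ℝ} (h0 : 0 ≤ x) (h1 : x ≤ 1/2) :
    -x / (1 - x) ≤ Real.log (1 - x) ∧ Real.log (1 - x) ≤ -x := by
  have hpos : 0 < 1 - x := by linarith
  constructor
  · have h2 : Real.log (1 - x)⁻¹ ≤ (1 - x)⁻¹ - 1 :=
      Real.log_le_sub_one_of_pos (inv_pos.mpr hpos)
    rw [Real.log_inv] at h2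
    have h3 : (1 - x)⁻¹ - 1 = x / (1 - x) := by field_simp; ring
    rw [h3] at h2
    have := neg_le_neg h2
    rw [neg_neg] at this
    calc -x / (1 - x) = -(x / (1 - x)) := by ring
    _ ≤ Real.log (1 - x) := this
  · have := Real.log_le_sub_one_of_pos hpos
    linarith

/-- main limit lemma -/
lemma tendsto_atMostOne (p : ℕ → ℝ) (hp : ∀ n, p n ∈ Set.Icc (0:ℝ) 1) (mu : ℝ)
    (hNp : Tendsto (fun n : ℕ => (n.choose 2 : ℝ) * p n) atTop (nhds mu))
    (hp0 : Tendsto p atTop (nhds 0)) :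
    Tendsto (fun n : ℕ => (1 - p n) ^ (n.choose 2)
        + (n.choose 2 : ℝ) * p n * (1 - p n) ^ (n.choose 2 - 1))
      atTop (nhds (Real.exp (-mu) * (1 + mu))) := by
  have hsmall : ∀ᶠ n : ℕ in atTop, p n ≤ 1/2 := by
    have := hp0.eventually (eventually_le_nhds (show (0:ℝ) < 1/2 by norm_num))
    exact this
  have h1mp : Tendsto (fun n : ℕ => 1 - p n) atTop (nhds 1) := by
    have := (tendsto_const_nhds (x := (1:ℝ)) (f := atTop)).sub hp0
    simpa using this
  -- log limit
  have hlog : Tendsto (fun n : ℕ => (n.choose 2 : ℝ) * Real.log (1 - p n)) atTop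
      (nhds (-mu)) := by
    have hlo : Tendsto (fun n : ℕ => -((n.choose 2 : ℝ) * p n) / (1 - p n)) atTop
        (nhds (-mu)) := by
      have := (hNp.neg).div h1mp one_ne_zero
      rw [div_one] at this; exact this
    have hhi : Tendsto (fun n : ℕ => -((n.choose 2 : ℝ) * p n)) atTop (nhds (-mu)) :=
      hNp.neg
    refine tendsto_of_tendsto_of_tendsto_of_le_of_le' hlo hhi ?_ ?_
    · filter_upwards [hsmall] with n hs
      have hb := (log_one_sub_bounds (hp n).1 hs).1
      have hN : (0:ℝ) ≤ (n.choose 2 : ℝ) := Nat.cast_nonneg _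
      calc -((n.choose 2 : ℝ) * p n) / (1 - p n)
          = (n.choose 2 : ℝ) * (-(p n) / (1 - p n)) := by ring
      _ ≤ (n.choose 2 : ℝ) * Real.log (1 - p n) := by
          refine mul_le_mul_of_nonneg_left ?_ hN
          calc -(p n) / (1 - p n) = -(p n) / (1 - p n) := rfl
          _ ≤ Real.log (1 - p n) := hb
    · filter_upwards [hsmall] with n hs
      have hb := (log_one_sub_bounds (hp n).1 hs).2
      have hN : (0:ℝ) ≤ (n.choose 2 : ℝ) := Nat.cast_nonneg _
      calc (n.choose 2 : ℝ) * Real.log (1 - p n)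
          ≤ (n.choose 2 : ℝ) * (-(p n)) := mul_le_mul_of_nonneg_left hb hN
      _ = -((n.choose 2 : ℝ) * p n) := by ring
  have hexp : Tendsto (fun n : ℕ => Real.exp ((n.choose 2 : ℝ) * Real.log (1 - p n)))
      atTop (nhds (Real.exp (-mu))) :=
    (Real.continuous_exp.continuousAt (x := -mu)).tendsto.comp hlog
  have h1 : Tendsto (fun n : ℕ => (1 - p n) ^ (n.choose 2)) atTop
      (nhds (Real.exp (-mu))) := by
    refine hexp.congr' ?_
    filter_upwards [hsmall] with n hs
    have hpos : 0 < 1 - p n := by linarith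
    rw [← Real.log_pow, Real.exp_log (pow_pos hpos _)]
  have h2 : Tendsto (fun n : ℕ => (1 - p n) ^ (n.choose 2 - 1)) atTop
      (nhds (Real.exp (-mu))) := by
    have hdiv : Tendsto (fun n : ℕ => (1 - p n) ^ (n.choose 2) / (1 - p n)) atTop
        (nhds (Real.exp (-mu))) := by
      have := h1.div h1mp one_ne_zero
      rw [div_one] at this; exact this
    refine hdiv.congr' ?_
    filter_upwards [hsmall, eventually_ge_atTop 2] with n hs hn2
    have hpos : (1 - p n) ≠ 0 := by intro hc; rw [sub_eq_zero] at hc; linarith [hc.symm]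
    have hN1 : 1 ≤ n.choose 2 := Nat.choose_pos hn2
    rw [pow_sub₀ _ hpos hN1, pow_one, div_eq_mul_inv]
  have := h1.add (hNp.mul h2)
  convert this using 2
  rw [Real.exp_neg]
  ring
end Analysis

lemma glue_limits (p : ℕ → ℝ) (hp : ∀ n, p n ∈ Set.Icc (0:ℝ) 1) (lam : ℝ)
    (h : Tendsto (fun n : ℕ => ((n : ℝ) * (1 - p n)) ^ 4 * p n ^ 2) atTop (nhds lam))
    (hp0 : Tendsto p atTop (nhds 0)) :
    Tendsto (fun n : ℕ => (n.choose 2 : ℝ) * p n) atTop (nhds (Real.sqrt lam / 2)) ∧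
    Tendsto (fun n : ℕ => (n : ℝ) ^ 3 * p n ^ 2) atTop (nhds 0) := by
  have hsmall : ∀ᶠ n : ℕ in atTop, p n ≤ 1/2 :=
    hp0.eventually (eventually_le_nhds (show (0:ℝ) < 1/2 by norm_num))
  have h1mp : Tendsto (fun n : ℕ => 1 - p n) atTop (nhds 1) := by
    have := (tendsto_const_nhds (x := (1:ℝ)) (f := atTop)).sub hp0
    simpa using this
  have hinv : Tendsto (fun n : ℕ => ((n:ℝ))⁻¹) atTop (nhds 0) :=
    tendsto_inv_atTop_zero.comp tendsto_natCast_atTop_atTop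
  have hq : Tendsto (fun n : ℕ => (n:ℝ)^2 * (1 - p n)^2 * p n) atTop
      (nhds (Real.sqrt lam)) := by
    have hcomp := (Real.continuous_sqrt.continuousAt (x := lam)).tendsto.comp h
    refine hcomp.congr fun n => ?_
    show Real.sqrt (((n : ℝ) * (1 - p n)) ^ 4 * p n ^ 2) = _
    rw [show ((n : ℝ) * (1 - p n)) ^ 4 * p n ^ 2
        = ((n:ℝ)^2 * (1 - p n)^2 * p n)^2 by ring]
    exact Real.sqrt_sq (mul_nonneg (mul_nonneg (sq_nonneg _) (sq_nonneg _)) (hp n).1)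
  have hn2p : Tendsto (fun n : ℕ => (n:ℝ)^2 * p n) atTop (nhds (Real.sqrt lam)) := by
    have hsq : Tendsto (fun n : ℕ => (1 - p n)^2) atTop (nhds 1) := by
      simpa using h1mp.pow 2
    have hdiv := hq.div hsq one_ne_zero
    rw [div_one] at hdiv
    refine hdiv.congr' ?_
    filter_upwards [hsmall] with n hs
    have hne : (1 - p n) ≠ 0 := by intro hc; rw [sub_eq_zero] at hc; linarith [hc.symm]
    rw [Pi.div_apply]
    field_simp
  have hnp : Tendsto (fun n : ℕ => (n:ℝ) * p n) atTop (nhds 0) := by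
    have hmul := hn2p.mul hinv
    rw [mul_zero] at hmul
    refine hmul.congr' ?_
    filter_upwards [eventually_ge_atTop 1] with n hn
    have hne : (n:ℝ) ≠ 0 := Nat.cast_ne_zero.mpr (by omega)
    field_simp
  constructor
  · have hdiff := (hn2p.sub hnp).div_const 2
    rw [sub_zero] at hdiff
    refine hdiff.congr' ?_
    filter_upwards [eventually_ge_atTop 1] with n hn
    rw [choose_two_cast hn]
    ring
  · have hq4 : Tendsto (fun n : ℕ => (1 - p n)^4) atTop (nhds 1) := by
      simpa using h1mp.pow 4
    have hn4 : Tendsto (fun n : ℕ => (n:ℝ)^4 * p n^2) atTop (nhds lam) := by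
      have hdiv := h.div hq4 one_ne_zero
      rw [div_one] at hdiv
      refine hdiv.congr' ?_
      filter_upwards [hsmall] with n hs
      have hne : (1 - p n) ≠ 0 := by intro hc; rw [sub_eq_zero] at hc; linarith [hc.symm]
      rw [Pi.div_apply]
      field_simp
    have hmul := hn4.mul hinv
    rw [mul_zero] at hmul
    refine hmul.congr' ?_
    filter_upwards [eventually_ge_atTop 1] with n hn
    have hne : (n:ℝ) ≠ 0 := Nat.cast_ne_zero.mpr (by omega)
    field_simp


/-- If `(n(1-p))⁴ p² → lam ∈ (0,∞)` and `p → 0`, then the probabilities that the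
complement of `G(n,p)` is 4-chordal and that it is chordal (equivalently, that the
edge ideal `I(n,p)` has linear presentation, resp. linear resolution) both converge
to `e^{-√lam/2} (1 + √lam/2)`. -/
theorem linear_presentation_resolution_prob_sparse (p : ℕ → ℝ)
    (hp : ∀ n, p n ∈ Set.Icc (0 : ℝ) 1) (lam : ℝ) (hlam : 0 < lam)
    (h : Tendsto (fun n : ℕ => ((n : ℝ) * (1 - p n)) ^ 4 * p n ^ 2) atTop (nhds lam))
    (hp0 : Tendsto p atTop (nhds 0)) :
    Tendsto (fun n : ℕ => erProb n (p n) {G | FourChordal Gᶜ}) atTop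
      (nhds (Real.exp (-Real.sqrt lam / 2) * (1 + Real.sqrt lam / 2))) ∧
    Tendsto (fun n : ℕ => erProb n (p n) {G | Chordal Gᶜ}) atTop
      (nhds (Real.exp (-Real.sqrt lam / 2) * (1 + Real.sqrt lam / 2))) := by
  classical
  obtain ⟨hNp, hcube⟩ := glue_limits p hp lam h hp0
  set mu : ℝ := Real.sqrt lam / 2 with hmu
  have hLval : Real.exp (-Real.sqrt lam / 2) * (1 + Real.sqrt lam / 2)
      = Real.exp (-mu) * (1 + mu) := by rw [hmu, neg_div]
  set c : ℕ → ℝ := fun n => erProb n (p n) {G : SimpleGraph (Fin n) | Nat.card G.edgeSet ≤ 1}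
    with hc_def
  set b : ℕ → ℝ := fun n => erProb n (p n)
    {G : SimpleGraph (Fin n) | ∃ x y z : Fin n, y ≠ z ∧ G.Adj x y ∧ G.Adj x z} with hb_def
  have hc : Tendsto c atTop (nhds (Real.exp (-mu) * (1 + mu))) := by
    have hT := tendsto_atMostOne p hp mu hNp hp0
    refine Tendsto.congr (fun n => ?_) hT
    rw [hc_def]
    exact (erProb_atMostOne).symm
  have hb0 : ∀ n, 0 ≤ b n := fun n => erProb_nonneg (hp n).1 (hp n).2 _
  have hble : ∀ n, b n ≤ (n : ℝ) ^ 3 * p n ^ 2 := fun n => erProb_P3_le (hp n).1 (hp n).2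
  have hb : Tendsto b atTop (nhds 0) :=
    tendsto_of_tendsto_of_tendsto_of_le_of_le tendsto_const_nhds hcube hb0 hble
  have hcb : Tendsto (fun n => c n + b n) atTop (nhds (Real.exp (-mu) * (1 + mu))) := by
    have := hc.add hb
    rwa [add_zero] at this
  have sub1 : ∀ n, {G : SimpleGraph (Fin n) | Nat.card G.edgeSet ≤ 1}
      ⊆ {G : SimpleGraph (Fin n) | Chordal Gᶜ} := fun n G hG => chordal_of_card_le_one hG
  have sub2 : ∀ n, {G : SimpleGraph (Fin n) | Chordal Gᶜ}
      ⊆ {G : SimpleGraph (Fin n) | FourChordal Gᶜ} :=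
    fun n G hG => fourChordal_of_chordal hG
  have sub3 : ∀ n, {G : SimpleGraph (Fin n) | FourChordal Gᶜ}
      ⊆ {G : SimpleGraph (Fin n) | Nat.card G.edgeSet ≤ 1}
        ∪ {G : SimpleGraph (Fin n) | ∃ x y z : Fin n, y ≠ z ∧ G.Adj x y ∧ G.Adj x z} := by
    intro n G hG
    by_cases h1 : Nat.card G.edgeSet ≤ 1
    · exact Or.inl h1
    · right
      by_contra hB
      exact not_fourChordal_compl (by omega) hB hG
  have hup4 : ∀ n, erProb n (p n) {G : SimpleGraph (Fin n) | FourChordal Gᶜ} ≤ c n + b n := by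
    intro n
    refine le_trans (erProb_mono (hp n).1 (hp n).2 (sub3 n)) ?_
    exact erProb_union_le (hp n).1 (hp n).2 _ _
  have hlow4 : ∀ n, c n ≤ erProb n (p n) {G : SimpleGraph (Fin n) | FourChordal Gᶜ} :=
    fun n => erProb_mono (hp n).1 (hp n).2 ((sub1 n).trans (sub2 n))
  have hlowC : ∀ n, c n ≤ erProb n (p n) {G : SimpleGraph (Fin n) | Chordal Gᶜ} :=
    fun n => erProb_mono (hp n).1 (hp n).2 (sub1 n)
  have hupC : ∀ n, erProb n (p n) {G : SimpleGraph (Fin n) | Chordal Gᶜ} ≤ c n + b n :=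
    fun n => le_trans (erProb_mono (hp n).1 (hp n).2 (sub2 n)) (hup4 n)
  rw [hLval]
  exact ⟨tendsto_of_tendsto_of_tendsto_of_le_of_le hc hcb hlow4 hup4,
    tendsto_of_tendsto_of_tendsto_of_le_of_le hc hcb hlowC hupC⟩
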